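/- Suppose α₁ ≥ α₂ and α₁α₂ > β₁β₂. Then almost surely on the event {τ = ∞}, liminf_{n→∞} T_n/n > 0. -/

import Mathlib

open MeasureTheory Filter

section Auxiliary

open Finset Topology ENNReal NNReal



lemma kronecker_aux {s : ℕ → ℝ} {l : ℝ}
    (h : Tendsto (fun n => ∑ k ∈ Finset.range n, s k / (k + 1)) atTop (𝓝 l)) :
    Tendsto (fun n => (∑ k ∈ Finset.range n, s k) / n) atTop (𝓝 0) := by
  set b : ℕ → ℝ := fun n => ∑ k ∈ Finset.range n, s k / (k + 1) with hb
  have key : ∀ n : ℕ, ∑ k ∈ Finset.range n, s k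
      = n * b n - ∑ k ∈ Finset.range n, b k := by
    intro n
    induction n with
    | zero => simp
    | succ n ih =>
      rw [Finset.sum_range_succ, ih, Finset.sum_range_succ (f := b)]
      have hbsucc : b (n + 1) = b n + s n / (n + 1) := by
        simp [hb, Finset.sum_range_succ]
      have hpos : (n : ℝ) + 1 ≠ 0 := by positivity
      push_cast
      rw [hbsucc]
      field_simp
      ring
  have hces : Tendsto (fun n : ℕ => ((n : ℝ))⁻¹ * ∑ i ∈ Finset.range n, b i) atTop (𝓝 l) :=
    Tendsto.cesaro h
  have : Tendsto (fun n : ℕ => (n : ℝ) * b n / n - ((n : ℝ))⁻¹ * ∑ i ∈ Finset.range n, b i)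
      atTop (𝓝 (l - l)) := by
    refine Tendsto.sub ?_ hces
    have heq : ∀ᶠ n : ℕ in atTop, (n : ℝ) * b n / n = b n := by
      filter_upwards [eventually_ne_atTop 0] with n hn
      have : (n : ℝ) ≠ 0 := Nat.cast_ne_zero.2 hn
      field_simp
    exact h.congr' (heq.mono fun n hn => hn.symm)
  rw [sub_self] at this
  refine this.congr fun n => ?_
  rw [key n, _root_.sub_div, mul_comm, div_eq_inv_mul, div_eq_inv_mul]


lemma aux_sum_sq (n : ℕ) : ∑ k ∈ Finset.range n, (((k : ℝ) + 1) ^ 2)⁻¹ ≤ (2 : ℝ) := by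
  have key : ∀ m : ℕ, ∑ k ∈ Finset.range m, (((k : ℝ) + 1) ^ 2)⁻¹ ≤ 2 - 2 / ((m : ℝ) + 1) := by
    intro m
    induction m with
    | zero => norm_num
    | succ m ih =>
      rw [Finset.sum_range_succ]
      have h1 : (0:ℝ) < (m : ℝ) + 1 := by positivity
      have h2 : (0:ℝ) < (m : ℝ) + 2 := by positivity
      have h3 : (((m : ℝ) + 1) ^ 2)⁻¹ ≤ 2 / ((m:ℝ) + 1) - 2 / ((m:ℝ) + 2) := by
        rw [div_sub_div _ _ h1.ne' h2.ne', inv_eq_one_div,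
          div_le_div_iff₀ (by positivity) (by positivity)]
        have hm : (0:ℝ) ≤ (m:ℝ) := Nat.cast_nonneg m
        nlinarith
      have h4 : ((m:ℝ) + 1 + 1) = (m:ℝ) + 2 := by ring
      push_cast
      rw [h4]
      linarith
  have h5 : (0:ℝ) ≤ 2 / ((n:ℝ) + 1) := by positivity
  linarith [key n]

lemma mds_slln {Ω : Type*} {m0 : MeasurableSpace Ω} (P : Measure Ω) [IsProbabilityMeasure P]
    (ℱ : Filtration ℕ m0) (V : ℕ → Ω → ℝ) (Cv : ℝ)
    (hmeas : ∀ n, StronglyMeasurable[ℱ (n + 1)] (V n))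
    (hbdd : ∀ n, ∀ᵐ ω ∂P, |V n ω| ≤ Cv)
    (hcond : ∀ n, P[V n|ℱ n] =ᵐ[P] 0) :
    ∀ᵐ ω ∂P, Tendsto (fun n => (∑ k ∈ Finset.range n, V k ω) / n) atTop (𝓝 0) := by
  have hVsm : ∀ n, StronglyMeasurable (V n) := fun n => (hmeas n).mono (ℱ.le (n + 1))
  have hVint : ∀ n, Integrable (V n) P := fun n =>
    Integrable.mono' (integrable_const Cv) (hVsm n).aestronglyMeasurable
      ((hbdd n).mono fun ω h => by simpa using h)
  set N : ℕ → Ω → ℝ := fun n ω => ∑ k ∈ Finset.range n, V k ω / (k + 1) with hN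
  have hdivsm : ∀ (k : ℕ) (m : MeasurableSpace Ω), StronglyMeasurable[m] (V k) →
      StronglyMeasurable[m] (fun ω => V k ω / ((k : ℝ) + 1)) := by
    intro k m h
    have := h.const_mul (((k : ℝ) + 1)⁻¹)
    simpa [div_eq_inv_mul] using this
  have hNsm : ∀ n, StronglyMeasurable[ℱ n] (N n) := by
    intro n
    apply Finset.stronglyMeasurable_fun_sum
    intro k hk
    exact hdivsm k _ ((hmeas k).mono (ℱ.mono (Finset.mem_range.1 hk)))
  have hNint : ∀ n, Integrable (N n) P := by
    intro n
    apply integrable_finset_sum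
    intro k _
    exact (hVint k).div_const _
  -- a.e. bound for N n
  have hbddall : ∀ᵐ ω ∂P, ∀ k, |V k ω| ≤ Cv := ae_all_iff.2 hbdd
  have hNbd : ∀ n, ∀ᵐ ω ∂P, |N n ω| ≤ ∑ k ∈ Finset.range n, |Cv| / (k + 1) := by
    intro n
    filter_upwards [hbddall] with ω hω
    calc |N n ω| ≤ ∑ k ∈ Finset.range n, |V k ω / (k + 1)| := Finset.abs_sum_le_sum_abs _ _
      _ ≤ ∑ k ∈ Finset.range n, |Cv| / (k + 1) := by
          apply Finset.sum_le_sum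
          intro k _
          have hk1 : (0:ℝ) < (k:ℝ) + 1 := by positivity
          rw [abs_div, abs_of_pos hk1]
          have : |V k ω| ≤ |Cv| := (hω k).trans (le_abs_self Cv)
          gcongr
  -- martingale property
  have hmart : Martingale N ℱ P := by
    refine martingale_nat (fun n => hNsm n) hNint (fun n => ?_)
    have hsplit : N (n + 1) = N n + fun ω => V n ω / ((n : ℝ) + 1) := by
      funext ω
      simp [hN, Finset.sum_range_succ]
    rw [hsplit]
    have h1 : P[N n + (fun ω => V n ω / ((n : ℝ) + 1))|ℱ n]
        =ᵐ[P] P[N n|ℱ n] + P[fun ω => V n ω / ((n : ℝ) + 1)|ℱ n] :=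
      condExp_add (m := ℱ n) (hNint n) ((hVint n).div_const _)
    have h2 : P[N n|ℱ n] = N n := condExp_of_stronglyMeasurable (ℱ.le n) (hNsm n) (hNint n)
    have h3 : P[fun ω => V n ω / ((n : ℝ) + 1)|ℱ n] =ᵐ[P] 0 := by
      have heq : (fun ω => V n ω / ((n : ℝ) + 1)) = ((n : ℝ) + 1)⁻¹ • V n := by
        funext ω; simp [div_eq_inv_mul]
      rw [heq]
      refine (condExp_smul (m := ℱ n) (((n : ℝ) + 1)⁻¹) (V n)).trans ?_
      filter_upwards [hcond n] with ω hω
      simp [hω]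
    filter_upwards [h1, h3] with ω h1ω h3ω
    simp only [Pi.add_apply] at *
    rw [h1ω, h2, h3ω]
    simp
  -- measurability and integrability of squares/products
  have hNm0sm : ∀ n, StronglyMeasurable (N n) := fun n => (hNsm n).mono (ℱ.le n)
  have hCv : 0 ≤ Cv := by
    have hne : (ae P).NeBot := ae_neBot.mpr (IsProbabilityMeasure.ne_zero P)
    obtain ⟨ω, hω⟩ := (hbdd 0).exists
    exact (abs_nonneg _).trans hω
  have hNsqint : ∀ n, Integrable (fun ω => (N n ω) ^ 2) P := by
    intro n
    refine Integrable.mono' (integrable_const ((∑ k ∈ Finset.range n, |Cv| / (k + 1)) ^ 2))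
      ?_ ?_
    · have : (fun ω => (N n ω) ^ 2) = fun ω => N n ω * N n ω := by
        funext ω; ring
      rw [this]
      exact ((hNm0sm n).mul (hNm0sm n)).aestronglyMeasurable
    · filter_upwards [hNbd n] with ω hω
      calc ‖(N n ω) ^ 2‖ = |N n ω| ^ 2 := by rw [Real.norm_eq_abs, abs_pow]
        _ ≤ (∑ k ∈ Finset.range n, |Cv| / (k + 1)) ^ 2 :=
            pow_le_pow_left₀ (abs_nonneg _) hω 2
  have hVsqint : ∀ n, Integrable (fun ω => (V n ω) ^ 2) P := by
    intro n
    refine Integrable.mono' (integrable_const (Cv ^ 2)) ?_ ?_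
    · have : (fun ω => (V n ω) ^ 2) = fun ω => V n ω * V n ω := by
        funext ω; ring
      rw [this]
      exact ((hVsm n).mul (hVsm n)).aestronglyMeasurable
    · filter_upwards [hbdd n] with ω hω
      calc ‖(V n ω) ^ 2‖ = |V n ω| ^ 2 := by rw [Real.norm_eq_abs, abs_pow]
        _ ≤ Cv ^ 2 := pow_le_pow_left₀ (abs_nonneg _) hω 2
  have hVsqle : ∀ n, ∫ ω, (V n ω) ^ 2 ∂P ≤ Cv ^ 2 := by
    intro n
    have hmono : ∫ ω, (V n ω) ^ 2 ∂P ≤ ∫ _ω, Cv ^ 2 ∂P := by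
      refine integral_mono_ae (hVsqint n) (integrable_const _) ?_
      filter_upwards [hbdd n] with ω hω
      calc (V n ω) ^ 2 = |V n ω| ^ 2 := (sq_abs _).symm
        _ ≤ Cv ^ 2 := pow_le_pow_left₀ (abs_nonneg _) hω 2
    simpa using hmono
  have hNVint : ∀ n, Integrable (fun ω => N n ω * V n ω) P := by
    intro n
    refine Integrable.mono' (integrable_const ((∑ k ∈ Finset.range n, |Cv| / (k + 1)) * Cv))
      ((hNm0sm n).mul (hVsm n)).aestronglyMeasurable ?_
    filter_upwards [hNbd n, hbdd n] with ω h1 h2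
    calc ‖N n ω * V n ω‖ = |N n ω| * |V n ω| := by rw [Real.norm_eq_abs, abs_mul]
      _ ≤ (∑ k ∈ Finset.range n, |Cv| / (k + 1)) * Cv :=
          mul_le_mul h1 h2 (abs_nonneg _) ((abs_nonneg _).trans h1)
  -- cross term vanishes
  have hcross : ∀ n, ∫ ω, N n ω * V n ω ∂P = 0 := by
    intro n
    have h1 : P[N n * V n|ℱ n] =ᵐ[P] N n * P[V n|ℱ n] :=
      condExp_mul_of_stronglyMeasurable_left (hNsm n) (hNVint n) (hVint n)
    have h2 : ∫ ω, N n ω * V n ω ∂P = ∫ ω, (P[N n * V n|ℱ n]) ω ∂P :=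
      (integral_condExp (ℱ.le n) (f := N n * V n)).symm
    rw [h2]
    have h3 : P[N n * V n|ℱ n] =ᵐ[P] 0 := by
      refine h1.trans ?_
      filter_upwards [hcond n] with ω hω
      simp only [Pi.mul_apply, Pi.zero_apply] at *
      rw [hω]; ring
    rw [integral_congr_ae h3]
    simp
  -- second moment bound by induction
  have hIbound : ∀ n, ∫ ω, (N n ω) ^ 2 ∂P ≤ Cv ^ 2 * ∑ k ∈ Finset.range n, (((k : ℝ) + 1) ^ 2)⁻¹ := by
    intro n
    induction n with
    | zero => simp [hN]
    | succ n ih =>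
      have hexp : ∀ ω, (N (n + 1) ω) ^ 2
          = ((N n ω) ^ 2 + (2 / ((n : ℝ) + 1)) * (N n ω * V n ω))
            + (((n : ℝ) + 1) ^ 2)⁻¹ * (V n ω) ^ 2 := by
        intro ω
        have hstep : N (n + 1) ω = N n ω + V n ω / ((n : ℝ) + 1) := by
          simp [hN, Finset.sum_range_succ]
        rw [hstep]
        have hne : ((n : ℝ) + 1) ≠ 0 := by positivity
        field_simp
        ring
      have hint1 : Integrable (fun ω => (N n ω) ^ 2 + (2 / ((n : ℝ) + 1)) * (N n ω * V n ω)) P :=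
        (hNsqint n).add (((hNVint n).const_mul _))
      have heq : ∫ ω, (N (n + 1) ω) ^ 2 ∂P
          = (∫ ω, (N n ω) ^ 2 ∂P + (2 / ((n : ℝ) + 1)) * ∫ ω, N n ω * V n ω ∂P)
            + (((n : ℝ) + 1) ^ 2)⁻¹ * ∫ ω, (V n ω) ^ 2 ∂P := by
        rw [integral_congr_ae (Filter.Eventually.of_forall hexp),
          integral_add hint1 ((hVsqint n).const_mul _),
          integral_add (hNsqint n) ((hNVint n).const_mul _),
          integral_const_mul, integral_const_mul]
      rw [heq, hcross n, Finset.sum_range_succ, mul_add]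
      have h6 : (((n : ℝ) + 1) ^ 2)⁻¹ * ∫ ω, (V n ω) ^ 2 ∂P
          ≤ Cv ^ 2 * (((n : ℝ) + 1) ^ 2)⁻¹ := by
        rw [mul_comm (Cv ^ 2)]
        exact mul_le_mul_of_nonneg_left (hVsqle n) (by positivity)
      linarith
  have hI2 : ∀ n, ∫ ω, (N n ω) ^ 2 ∂P ≤ 2 * Cv ^ 2 := by
    intro n
    calc ∫ ω, (N n ω) ^ 2 ∂P ≤ Cv ^ 2 * ∑ k ∈ Finset.range n, (((k : ℝ) + 1) ^ 2)⁻¹ :=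
        hIbound n
      _ ≤ Cv ^ 2 * 2 := mul_le_mul_of_nonneg_left (aux_sum_sq n) (sq_nonneg Cv)
      _ = 2 * Cv ^ 2 := by ring
  -- L¹ bound via variance
  have habs_mem : ∀ n, MemLp (fun ω => |N n ω|) 2 P := by
    intro n
    refine MemLp.of_bound (hNm0sm n).measurable.abs.aestronglyMeasurable
      (∑ k ∈ Finset.range n, |Cv| / (k + 1)) ?_
    filter_upwards [hNbd n] with ω hω
    simpa [Real.norm_eq_abs, abs_abs] using hω
  have hL1 : ∀ n, ∫ ω, |N n ω| ∂P ≤ Real.sqrt (2 * Cv ^ 2) := by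
    intro n
    have hvar := ProbabilityTheory.variance_nonneg (fun ω => |N n ω|) P
    rw [ProbabilityTheory.variance_eq_sub (habs_mem n)] at hvar
    have h1 : ∫ ω, ((fun ω => |N n ω|) ^ 2) ω ∂P = ∫ ω, (N n ω) ^ 2 ∂P := by
      apply integral_congr_ae
      filter_upwards with ω
      simp [sq_abs]
    have hsq : (∫ ω, |N n ω| ∂P) ^ 2 ≤ 2 * Cv ^ 2 := by
      have h2 : (∫ ω, |N n ω| ∂P) ^ 2 ≤ ∫ ω, (N n ω) ^ 2 ∂P := by
        rw [← h1]
        simpa using hvar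
      exact h2.trans (hI2 n)
    have hnn : 0 ≤ ∫ ω, |N n ω| ∂P := integral_nonneg fun ω => abs_nonneg _
    calc ∫ ω, |N n ω| ∂P = Real.sqrt ((∫ ω, |N n ω| ∂P) ^ 2) := (Real.sqrt_sq hnn).symm
      _ ≤ Real.sqrt (2 * Cv ^ 2) := Real.sqrt_le_sqrt hsq
  have hsnorm : ∀ n, eLpNorm (N n) 1 P ≤ ((Real.sqrt (2 * Cv ^ 2)).toNNReal : ℝ≥0∞) := by
    intro n
    rw [eLpNorm_one_eq_lintegral_enorm, ← ofReal_integral_norm_eq_lintegral_enorm (hNint n)]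
    have h3 : ((Real.sqrt (2 * Cv ^ 2)).toNNReal : ℝ≥0∞)
        = ENNReal.ofReal (Real.sqrt (2 * Cv ^ 2)) := rfl
    rw [h3]
    apply ENNReal.ofReal_le_ofReal
    simpa [Real.norm_eq_abs] using hL1 n
  have hconv := hmart.submartingale.exists_ae_tendsto_of_bdd hsnorm
  filter_upwards [hconv] with ω hω
  obtain ⟨l, hl⟩ := hω
  exact kronecker_aux hl

lemma condExp_lin4 {Ω : Type*} {m0 : MeasurableSpace Ω} {P : Measure Ω} [IsProbabilityMeasure P]
    {m : MeasurableSpace Ω} (a b c d : ℝ) {f1 f2 f3 f4 g1 g2 g3 g4 : Ω → ℝ}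
    (h1 : Integrable f1 P) (h2 : Integrable f2 P) (h3 : Integrable f3 P) (h4 : Integrable f4 P)
    (hc1 : P[f1|m] =ᵐ[P] g1) (hc2 : P[f2|m] =ᵐ[P] g2)
    (hc3 : P[f3|m] =ᵐ[P] g3) (hc4 : P[f4|m] =ᵐ[P] g4) :
    P[fun ω => a * f1 ω + b * f2 ω + c * f3 ω + d * f4 ω|m]
      =ᵐ[P] fun ω => a * g1 ω + b * g2 ω + c * g3 ω + d * g4 ω := by
  have e : (fun ω => a * f1 ω + b * f2 ω + c * f3 ω + d * f4 ω)
      = (a • f1 + b • f2) + (c • f3 + d • f4) := by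
    funext ω; simp only [Pi.add_apply, Pi.smul_apply, smul_eq_mul]; ring
  rw [e]
  have H1 : P[a • f1|m] =ᵐ[P] a • g1 :=
    (condExp_smul (m := m) a f1).trans (hc1.mono fun ω h => by simp [h])
  have H2 : P[b • f2|m] =ᵐ[P] b • g2 :=
    (condExp_smul (m := m) b f2).trans (hc2.mono fun ω h => by simp [h])
  have H3 : P[c • f3|m] =ᵐ[P] c • g3 :=
    (condExp_smul (m := m) c f3).trans (hc3.mono fun ω h => by simp [h])
  have H4 : P[d • f4|m] =ᵐ[P] d • g4 :=
    (condExp_smul (m := m) d f4).trans (hc4.mono fun ω h => by simp [h])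
  have HA : P[a • f1 + b • f2|m] =ᵐ[P] a • g1 + b • g2 :=
    (condExp_add (m := m) (h1.smul a) (h2.smul b)).trans (H1.add H2)
  have HB : P[c • f3 + d • f4|m] =ᵐ[P] c • g3 + d • g4 :=
    (condExp_add (m := m) (h3.smul c) (h4.smul d)).trans (H3.add H4)
  refine ((condExp_add (m := m) ((h1.smul a).add (h2.smul b)) ((h3.smul c).add (h4.smul d))).trans
    (HA.add HB)).trans ?_
  filter_upwards with ω
  simp only [Pi.add_apply, Pi.smul_apply, smul_eq_mul]
  ring

lemma stmt7_alg {l₁ l₂ β₁ β₂ α₁ α₂ r c δ K A B ε x y Wv : ℝ}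
    (hl₁ : 0 < l₁) (hl₂ : 0 < l₂) (hβ₁ : 0 < β₁) (hβ₂ : 0 < β₂)
    (hα₁ : 0 ≤ α₁) (hα₂ : 0 ≤ α₂)
    (hc : c = r * β₂ + α₁ - α₂) (hcpos : 0 < c)
    (hδ : δ = α₂ - r * β₂) (hδpos : 0 < δ)
    (hrc : r * c = β₁)
    (hK : K = β₂ * l₁ + c * l₂) (hA : A = l₁ + l₂)
    (hB : B = max ((α₁ + β₂) / β₂) ((α₂ + β₁) / c))
    (hε : ε = min (K / A) (δ / B))
    (hx : 1 ≤ x) (hy : 1 ≤ y)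
    (hWv : Wv = l₁ + α₁ * x + (l₂ + α₂ * y) + β₁ * y + β₂ * x) :
    ε ≤ β₂ * ((l₁ + α₁ * x) / Wv) + (-β₂) * ((β₁ * y) / Wv)
      + c * ((l₂ + α₂ * y) / Wv) + (-c) * ((β₂ * x) / Wv) := by
  have hKpos : 0 < K := by rw [hK]; positivity
  have hApos : 0 < A := by rw [hA]; positivity
  have hBpos : 0 < B := by rw [hB]; exact lt_max_of_lt_left (by positivity)
  have hεpos : 0 < ε := by rw [hε]; exact lt_min (by positivity) (by positivity)
  have hWpos : 0 < Wv := by rw [hWv]; nlinarith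
  have hGeq : β₂ * ((l₁ + α₁ * x) / Wv) + (-β₂) * ((β₁ * y) / Wv)
      + c * ((l₂ + α₂ * y) / Wv) + (-c) * ((β₂ * x) / Wv)
      = (β₂ * (l₁ + α₁ * x) - β₂ * (β₁ * y) + c * (l₂ + α₂ * y) - c * (β₂ * x)) / Wv := by
    ring
  rw [hGeq, le_div_iff₀ hWpos]
  have hrc' : r * (r * β₂ + α₁ - α₂) = β₁ := by rw [← hc]; exact hrc
  have hnum : β₂ * (l₁ + α₁ * x) - β₂ * (β₁ * y) + c * (l₂ + α₂ * y) - c * (β₂ * x)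
      = K + δ * (β₂ * x + c * y) := by
    rw [hK, hδ, hc]
    linear_combination (β₂ * y) * hrc'
  have hb1 : α₁ + β₂ ≤ B * β₂ := by
    have h := le_max_left ((α₁ + β₂) / β₂) ((α₂ + β₁) / c)
    rw [← hB, div_le_iff₀ hβ₂] at h
    linarith
  have hb2 : α₂ + β₁ ≤ B * c := by
    have h := le_max_right ((α₁ + β₂) / β₂) ((α₂ + β₁) / c)
    rw [← hB, div_le_iff₀ hcpos] at h
    linarith
  have hεA : ε * A ≤ K := by
    have h := min_le_left (K / A) (δ / B)
    rw [← hε] at h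
    calc ε * A ≤ (K / A) * A := mul_le_mul_of_nonneg_right h hApos.le
      _ = K := by field_simp
  have hεB : ε * B ≤ δ := by
    have h := min_le_right (K / A) (δ / B)
    rw [← hε] at h
    calc ε * B ≤ (δ / B) * B := mul_le_mul_of_nonneg_right h hBpos.le
      _ = δ := by field_simp
  have hx0 : 0 ≤ x := by linarith
  have hy0 : 0 ≤ y := by linarith
  have hWle : Wv ≤ A + B * (β₂ * x + c * y) := by
    have h1 : (α₁ + β₂) * x ≤ B * β₂ * x := mul_le_mul_of_nonneg_right hb1 hx0
    have h2 : (α₂ + β₁) * y ≤ B * c * y := mul_le_mul_of_nonneg_right hb2 hy0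
    rw [hWv, hA]
    nlinarith
  rw [hnum]
  have hTnn : 0 ≤ β₂ * x + c * y := by positivity
  have hεδT : (ε * B) * (β₂ * x + c * y) ≤ δ * (β₂ * x + c * y) :=
    mul_le_mul_of_nonneg_right hεB hTnn
  calc ε * Wv ≤ ε * (A + B * (β₂ * x + c * y)) := mul_le_mul_of_nonneg_left hWle hεpos.le
    _ = ε * A + (ε * B) * (β₂ * x + c * y) := by ring
    _ ≤ K + δ * (β₂ * x + c * y) := by linarith

end Auxiliary

/-- Corollary on `Tₙ`. For the discrete-time competition process with
linear interaction, if `α₁ ≥ α₂` and `α₁α₂ > β₁β₂`, then almost surely on the event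
`{τ = ∞}`, `liminf_{n→∞} Tₙ/n > 0`, where `Tₙ = β₂ζ₁(n) + (rβ₂ + α₁ − α₂)ζ₂(n)` and
`r` is the positive root of `β₂r² + (α₁ − α₂)r − β₁ = 0`. -/
theorem stmt_7
    {Ω : Type*} {m0 : MeasurableSpace Ω} (P : Measure Ω) [IsProbabilityMeasure P]
    (ℱ : Filtration ℕ m0)
    (l₁ l₂ β₁ β₂ α₁ α₂ : ℝ)
    (hl₁ : 0 < l₁) (hl₂ : 0 < l₂) (hβ₁ : 0 < β₁) (hβ₂ : 0 < β₂)
    (hα₁ : 0 ≤ α₁) (hα₂ : 0 ≤ α₂)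
    (ζ₁ ζ₂ : ℕ → Ω → ℕ)
    (hζ₁meas : ∀ n, Measurable[ℱ n] (ζ₁ n)) (hζ₂meas : ∀ n, Measurable[ℱ n] (ζ₂ n))
    (x₀ y₀ : ℕ) (hinit : ∀ ω, ζ₁ 0 ω = x₀ ∧ ζ₂ 0 ω = y₀)
    (hstep : ∀ n, ∀ᵐ ω ∂P,
      (ζ₁ (n + 1) ω = ζ₁ n ω + 1 ∧ ζ₂ (n + 1) ω = ζ₂ n ω) ∨
      (ζ₁ (n + 1) ω = ζ₁ n ω ∧ ζ₂ (n + 1) ω = ζ₂ n ω + 1) ∨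
      (ζ₁ (n + 1) ω + 1 = ζ₁ n ω ∧ ζ₂ (n + 1) ω = ζ₂ n ω) ∨
      (ζ₁ (n + 1) ω = ζ₁ n ω ∧ ζ₂ (n + 1) ω + 1 = ζ₂ n ω))
    (W : ℕ → Ω → ℝ)
    (hW : ∀ n ω, W n ω =
      (l₁ + α₁ * (ζ₁ n ω : ℝ)) + (l₂ + α₂ * (ζ₂ n ω : ℝ)) +
      (if 1 ≤ ζ₁ n ω then β₁ * (ζ₂ n ω : ℝ) else 0) +
      (if 1 ≤ ζ₂ n ω then β₂ * (ζ₁ n ω : ℝ) else 0))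
    (hright : ∀ n,
      P[({ω' | ζ₁ (n + 1) ω' = ζ₁ n ω' + 1 ∧ ζ₂ (n + 1) ω' = ζ₂ n ω'} : Set Ω).indicator
          (fun _ => (1 : ℝ)) | ℱ n]
        =ᵐ[P] fun ω => (l₁ + α₁ * (ζ₁ n ω : ℝ)) / W n ω)
    (hupp : ∀ n,
      P[({ω' | ζ₁ (n + 1) ω' = ζ₁ n ω' ∧ ζ₂ (n + 1) ω' = ζ₂ n ω' + 1} : Set Ω).indicator
          (fun _ => (1 : ℝ)) | ℱ n]
        =ᵐ[P] fun ω => (l₂ + α₂ * (ζ₂ n ω : ℝ)) / W n ω)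
    (hleft : ∀ n,
      P[({ω' | ζ₁ (n + 1) ω' + 1 = ζ₁ n ω' ∧ ζ₂ (n + 1) ω' = ζ₂ n ω'} : Set Ω).indicator
          (fun _ => (1 : ℝ)) | ℱ n]
        =ᵐ[P] fun ω => (if 1 ≤ ζ₁ n ω then β₁ * (ζ₂ n ω : ℝ) else 0) / W n ω)
    (hdownp : ∀ n,
      P[({ω' | ζ₁ (n + 1) ω' = ζ₁ n ω' ∧ ζ₂ (n + 1) ω' + 1 = ζ₂ n ω'} : Set Ω).indicator
          (fun _ => (1 : ℝ)) | ℱ n]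
        =ᵐ[P] fun ω => (if 1 ≤ ζ₂ n ω then β₂ * (ζ₁ n ω : ℝ) else 0) / W n ω)
    (ha12 : α₂ ≤ α₁) (hab : β₁ * β₂ < α₁ * α₂)
    (r : ℝ) (hr : r = (-(α₁ - α₂) + Real.sqrt ((α₁ - α₂) ^ 2 + 4 * β₁ * β₂)) / (2 * β₂))
    (T : ℕ → Ω → ℝ)
    (hT : ∀ n ω, T n ω = β₂ * (ζ₁ n ω : ℝ) + (r * β₂ + α₁ - α₂) * (ζ₂ n ω : ℝ)) :
    ∀ᵐ ω ∂P, (∀ n, ζ₁ n ω ≠ 0 ∧ ζ₂ n ω ≠ 0) →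
      0 < Filter.liminf (fun n : ℕ => T n ω / (n : ℝ)) atTop := by
  classical
  -- basic positivity of parameters
  have hα₂pos : 0 < α₂ := by
    rcases lt_or_ge 0 α₂ with h | h
    · exact h
    · exfalso; nlinarith [mul_pos hβ₁ hβ₂]
  have hα₁pos : 0 < α₁ := lt_of_lt_of_le hα₂pos ha12
  -- the square root
  set s : ℝ := Real.sqrt ((α₁ - α₂) ^ 2 + 4 * β₁ * β₂) with hs
  have hs0 : 0 ≤ s := Real.sqrt_nonneg _
  have hs2 : s ^ 2 = (α₁ - α₂) ^ 2 + 4 * β₁ * β₂ := Real.sq_sqrt (by positivity)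
  have hds : α₁ - α₂ < s := by
    refine lt_of_pow_lt_pow_left₀ 2 hs0 ?_
    rw [hs2]; nlinarith [mul_pos hβ₁ hβ₂]
  have hrpos : 0 < r := by
    rw [hr]
    apply div_pos (by linarith) (by linarith)
  have hrβ : r * β₂ = (-(α₁ - α₂) + s) / 2 := by
    rw [hr]; field_simp
  have hslt : s < α₁ + α₂ := by
    refine lt_of_pow_lt_pow_left₀ 2 (by positivity) ?_
    rw [hs2]; nlinarith
  set c : ℝ := r * β₂ + α₁ - α₂ with hc
  have hcpos : 0 < c := by rw [hc, hrβ]; linarith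
  have hrc : r * c = β₁ := by
    rw [hc, hr]
    have hβ₂' : (2 : ℝ) * β₂ ≠ 0 := by positivity
    field_simp
    nlinarith [hs2]
  set δ : ℝ := α₂ - r * β₂ with hδ
  have hδpos : 0 < δ := by rw [hδ, hrβ]; linarith
  -- constants
  set K : ℝ := β₂ * l₁ + c * l₂ with hK
  have hKpos : 0 < K := by positivity
  set A : ℝ := l₁ + l₂ with hA
  have hApos : 0 < A := by positivity
  set B : ℝ := max ((α₁ + β₂) / β₂) ((α₂ + β₁) / c) with hB
  have hBpos : 0 < B := lt_max_of_lt_left (by positivity)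
  set ε : ℝ := min (K / A) (δ / B) with hε
  have hεpos : 0 < ε := lt_min (by positivity) (by positivity)
  set C : ℝ := max β₂ c with hC
  have hCpos : 0 < C := lt_max_of_lt_left hβ₂
  set C₀ : ℝ := max C ε with hC₀
  have hC₀pos : 0 < C₀ := lt_max_of_lt_left hCpos
  -- measurability of the coordinate processes w.r.t. m0
  have hζ₁m : ∀ n, Measurable (ζ₁ n) := fun n => (hζ₁meas n).mono (ℱ.le n) le_rfl
  have hζ₂m : ∀ n, Measurable (ζ₂ n) := fun n => (hζ₂meas n).mono (ℱ.le n) le_rfl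
  -- T is measurable
  have hTmeas : ∀ (n : ℕ) (m : MeasurableSpace Ω), Measurable[m] (ζ₁ n) →
      Measurable[m] (ζ₂ n) → Measurable[m] (T n) := by
    intro n m h1 h2
    have : T n = fun ω => β₂ * ((ζ₁ n ω : ℝ)) + c * ((ζ₂ n ω : ℝ)) := by
      funext ω; rw [hT n ω, hc]
    rw [this]
    exact ((measurable_from_top.comp h1).const_mul β₂).add
      ((measurable_from_top.comp h2).const_mul c)
  -- the four jump events
  set SR : ℕ → Set Ω := fun n =>
    {ω' | ζ₁ (n + 1) ω' = ζ₁ n ω' + 1 ∧ ζ₂ (n + 1) ω' = ζ₂ n ω'} with hSR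
  set SU : ℕ → Set Ω := fun n =>
    {ω' | ζ₁ (n + 1) ω' = ζ₁ n ω' ∧ ζ₂ (n + 1) ω' = ζ₂ n ω' + 1} with hSU
  set SL : ℕ → Set Ω := fun n =>
    {ω' | ζ₁ (n + 1) ω' + 1 = ζ₁ n ω' ∧ ζ₂ (n + 1) ω' = ζ₂ n ω'} with hSL
  set SD : ℕ → Set Ω := fun n =>
    {ω' | ζ₁ (n + 1) ω' = ζ₁ n ω' ∧ ζ₂ (n + 1) ω' + 1 = ζ₂ n ω'} with hSD
  have hmeasSet : ∀ (f g : Ω → ℕ), Measurable f → Measurable g →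
      MeasurableSet {ω | f ω = g ω} := by
    intro f g hf hg
    have : {ω | f ω = g ω} = ⋃ k : ℕ, (f ⁻¹' {k} ∩ g ⁻¹' {k}) := by
      ext ω
      simp only [Set.mem_setOf_eq, Set.mem_iUnion, Set.mem_inter_iff, Set.mem_preimage,
        Set.mem_singleton_iff]
      constructor
      · intro h; exact ⟨f ω, rfl, h.symm⟩
      · rintro ⟨k, h1, h2⟩; rw [h1, h2]
    rw [this]
    exact MeasurableSet.iUnion fun k =>
      (hf (measurableSet_singleton k)).inter (hg (measurableSet_singleton k))
  have hSRmeas : ∀ n, MeasurableSet (SR n) := by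
    intro n
    have : SR n = {ω | ζ₁ (n + 1) ω = ζ₁ n ω + 1} ∩ {ω | ζ₂ (n + 1) ω = ζ₂ n ω} := rfl
    rw [this]
    exact (hmeasSet _ _ (hζ₁m (n + 1)) ((hζ₁m n).add_const 1)).inter
      (hmeasSet _ _ (hζ₂m (n + 1)) (hζ₂m n))
  have hSUmeas : ∀ n, MeasurableSet (SU n) := by
    intro n
    have : SU n = {ω | ζ₁ (n + 1) ω = ζ₁ n ω} ∩ {ω | ζ₂ (n + 1) ω = ζ₂ n ω + 1} := rfl
    rw [this]
    exact (hmeasSet _ _ (hζ₁m (n + 1)) (hζ₁m n)).inter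
      (hmeasSet _ _ (hζ₂m (n + 1)) ((hζ₂m n).add_const 1))
  have hSLmeas : ∀ n, MeasurableSet (SL n) := by
    intro n
    have : SL n = {ω | ζ₁ (n + 1) ω + 1 = ζ₁ n ω} ∩ {ω | ζ₂ (n + 1) ω = ζ₂ n ω} := rfl
    rw [this]
    exact (hmeasSet _ _ ((hζ₁m (n + 1)).add_const 1) (hζ₁m n)).inter
      (hmeasSet _ _ (hζ₂m (n + 1)) (hζ₂m n))
  have hSDmeas : ∀ n, MeasurableSet (SD n) := by
    intro n
    have : SD n = {ω | ζ₁ (n + 1) ω = ζ₁ n ω} ∩ {ω | ζ₂ (n + 1) ω + 1 = ζ₂ n ω} := rfl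
    rw [this]
    exact (hmeasSet _ _ (hζ₁m (n + 1)) (hζ₁m n)).inter
      (hmeasSet _ _ ((hζ₂m (n + 1)).add_const 1) (hζ₂m n))
  -- the increments of T
  set D : ℕ → Ω → ℝ := fun n ω => T (n + 1) ω - T n ω with hD
  have hone : ∀ (S : Set Ω), Integrable (S.indicator (fun _ => (1 : ℝ))) P → True := fun _ _ => trivial
  -- a.e. decomposition of D in terms of the four indicators
  have hDval : ∀ n, ∀ᵐ ω ∂P, D n ω
      = β₂ * (SR n).indicator (fun _ => (1 : ℝ)) ω
        + (-β₂) * (SL n).indicator (fun _ => (1 : ℝ)) ω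
        + c * (SU n).indicator (fun _ => (1 : ℝ)) ω
        + (-c) * (SD n).indicator (fun _ => (1 : ℝ)) ω := by
    intro n
    filter_upwards [hstep n] with ω hω
    have hiR : ∀ h : ω ∈ SR n, (SR n).indicator (fun _ => (1 : ℝ)) ω = 1 :=
      fun h => Set.indicator_of_mem h _
    simp only [hD]
    rcases hω with ⟨h1, h2⟩ | ⟨h1, h2⟩ | ⟨h1, h2⟩ | ⟨h1, h2⟩
    · rw [Set.indicator_of_mem (show ω ∈ SR n from ⟨h1, h2⟩),
        Set.indicator_of_notMem (show ω ∉ SL n from by rintro ⟨a, b⟩; omega),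
        Set.indicator_of_notMem (show ω ∉ SU n from by rintro ⟨a, b⟩; omega),
        Set.indicator_of_notMem (show ω ∉ SD n from by rintro ⟨a, b⟩; omega),
        hT, hT, h1, h2, hc]
      push_cast
      ring
    · rw [Set.indicator_of_notMem (show ω ∉ SR n from by rintro ⟨a, b⟩; omega),
        Set.indicator_of_notMem (show ω ∉ SL n from by rintro ⟨a, b⟩; omega),
        Set.indicator_of_mem (show ω ∈ SU n from ⟨h1, h2⟩),
        Set.indicator_of_notMem (show ω ∉ SD n from by rintro ⟨a, b⟩; omega),
        hT, hT, h1, h2, hc]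
      push_cast
      ring
    · rw [Set.indicator_of_notMem (show ω ∉ SR n from by rintro ⟨a, b⟩; omega),
        Set.indicator_of_mem (show ω ∈ SL n from ⟨h1, h2⟩),
        Set.indicator_of_notMem (show ω ∉ SU n from by rintro ⟨a, b⟩; omega),
        Set.indicator_of_notMem (show ω ∉ SD n from by rintro ⟨a, b⟩; omega),
        hT, hT, ← h1, h2, hc]
      push_cast
      ring
    · rw [Set.indicator_of_notMem (show ω ∉ SR n from by rintro ⟨a, b⟩; omega),
        Set.indicator_of_notMem (show ω ∉ SL n from by rintro ⟨a, b⟩; omega),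
        Set.indicator_of_notMem (show ω ∉ SU n from by rintro ⟨a, b⟩; omega),
        Set.indicator_of_mem (show ω ∈ SD n from ⟨h1, h2⟩),
        hT, hT, h1, ← h2, hc]
      push_cast
      ring
  -- a.e. bound on D
  have hDabs : ∀ n, ∀ᵐ ω ∂P, |D n ω| ≤ C := by
    intro n
    filter_upwards [hstep n] with ω hω
    simp only [hD]
    rcases hω with ⟨h1, h2⟩ | ⟨h1, h2⟩ | ⟨h1, h2⟩ | ⟨h1, h2⟩
    · have : T (n + 1) ω - T n ω = β₂ := by
        rw [hT, hT, h1, h2, hc]; push_cast; ring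
      rw [this, abs_of_pos hβ₂]; exact le_max_left _ _
    · have : T (n + 1) ω - T n ω = c := by
        rw [hT, hT, h1, h2, hc]; push_cast; ring
      rw [this, abs_of_pos hcpos]; exact le_max_right _ _
    · have : T (n + 1) ω - T n ω = -β₂ := by
        rw [hT, hT, ← h1, h2, hc]; push_cast; ring
      rw [this, abs_neg, abs_of_pos hβ₂]; exact le_max_left _ _
    · have : T (n + 1) ω - T n ω = -c := by
        rw [hT, hT, h1, ← h2, hc]; push_cast; ring
      rw [this, abs_neg, abs_of_pos hcpos]; exact le_max_right _ _
  -- integrability of D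
  have hDmeas : ∀ n, Measurable (D n) := by
    intro n
    exact (hTmeas (n + 1) m0 (hζ₁m (n + 1)) (hζ₂m (n + 1))).sub (hTmeas n m0 (hζ₁m n) (hζ₂m n))
  have hDint : ∀ n, Integrable (D n) P := by
    intro n
    refine Integrable.mono' (integrable_const C) (hDmeas n).aestronglyMeasurable ?_
    filter_upwards [hDabs n] with ω hω
    simpa using hω
  -- conditional expectation of D
  set G : ℕ → Ω → ℝ := fun n ω =>
    β₂ * ((l₁ + α₁ * (ζ₁ n ω : ℝ)) / W n ω)
      + (-β₂) * ((if 1 ≤ ζ₁ n ω then β₁ * (ζ₂ n ω : ℝ) else 0) / W n ω)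
      + c * ((l₂ + α₂ * (ζ₂ n ω : ℝ)) / W n ω)
      + (-c) * ((if 1 ≤ ζ₂ n ω then β₂ * (ζ₁ n ω : ℝ) else 0) / W n ω) with hG
  have hDce : ∀ n, P[D n|ℱ n] =ᵐ[P] G n := by
    intro n
    refine (condExp_congr_ae (m := ℱ n) (hDval n)).trans ?_
    exact condExp_lin4 β₂ (-β₂) c (-c)
      ((integrable_const (1 : ℝ)).indicator (hSRmeas n))
      ((integrable_const (1 : ℝ)).indicator (hSLmeas n))
      ((integrable_const (1 : ℝ)).indicator (hSUmeas n))
      ((integrable_const (1 : ℝ)).indicator (hSDmeas n))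
      (hright n) (hleft n) (hupp n) (hdownp n)
  -- the survival events
  set E : ℕ → Set Ω := fun n => {ω | ∀ k ≤ n, 1 ≤ ζ₁ k ω ∧ 1 ≤ ζ₂ k ω} with hE
  have hEmeasF : ∀ n, MeasurableSet[ℱ n] (E n) := by
    intro n
    have : E n = ⋂ (k : ℕ) (_ : k ≤ n),
        ({ω | 1 ≤ ζ₁ k ω} ∩ {ω | 1 ≤ ζ₂ k ω}) := by
      ext ω
      simp only [hE, Set.mem_setOf_eq, Set.mem_iInter, Set.mem_inter_iff]
    rw [this]
    refine MeasurableSet.iInter fun k => MeasurableSet.iInter fun hk => ?_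
    have h1 : MeasurableSet[ℱ k] {ω | 1 ≤ ζ₁ k ω} :=
      hζ₁meas k (show MeasurableSet {m : ℕ | 1 ≤ m} from trivial)
    have h2 : MeasurableSet[ℱ k] {ω | 1 ≤ ζ₂ k ω} :=
      hζ₂meas k (show MeasurableSet {m : ℕ | 1 ≤ m} from trivial)
    exact (ℱ.mono hk _ h1).inter (ℱ.mono hk _ h2)
  have hEmeas : ∀ n, MeasurableSet (E n) := fun n => ℱ.le n _ (hEmeasF n)
  -- lower bound for G on the event E n
  have hGge : ∀ n ω, ω ∈ E n → ε ≤ G n ω := by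
    intro n ω hω
    obtain ⟨hx', hy'⟩ := hω n le_rfl
    have hx : (1 : ℝ) ≤ (ζ₁ n ω : ℝ) := by exact_mod_cast hx'
    have hy : (1 : ℝ) ≤ (ζ₂ n ω : ℝ) := by exact_mod_cast hy'
    have hGeq : G n ω = β₂ * ((l₁ + α₁ * (ζ₁ n ω : ℝ)) / W n ω)
        + (-β₂) * ((β₁ * (ζ₂ n ω : ℝ)) / W n ω)
        + c * ((l₂ + α₂ * (ζ₂ n ω : ℝ)) / W n ω)
        + (-c) * ((β₂ * (ζ₁ n ω : ℝ)) / W n ω) := by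
      simp only [hG, if_pos hx', if_pos hy']
    have hWeq : W n ω = l₁ + α₁ * (ζ₁ n ω : ℝ) + (l₂ + α₂ * (ζ₂ n ω : ℝ))
        + β₁ * (ζ₂ n ω : ℝ) + β₂ * (ζ₁ n ω : ℝ) := by
      rw [hW n ω, if_pos hx', if_pos hy']
    rw [hGeq]
    exact stmt7_alg hl₁ hl₂ hβ₁ hβ₂ hα₁ hα₂ hc hcpos hδ hδpos hrc hK hA hB hε hx hy hWeq
  -- the modified increment U
  set U : ℕ → Ω → ℝ := fun n => (E n).indicator (D n) + (E n)ᶜ.indicator (fun _ => ε) with hU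
  have hUint : ∀ n, Integrable (U n) P := fun n =>
    ((hDint n).indicator (hEmeas n)).add ((integrable_const ε).indicator (hEmeas n).compl)
  have hUce : ∀ n, P[U n|ℱ n]
      =ᵐ[P] (E n).indicator (P[D n|ℱ n]) + (E n)ᶜ.indicator (fun _ => ε) := by
    intro n
    refine (condExp_add (m := ℱ n) ((hDint n).indicator (hEmeas n))
      ((integrable_const ε).indicator (hEmeas n).compl)).trans ?_
    have h2 : P[(E n).indicator (D n)|ℱ n] =ᵐ[P] (E n).indicator (P[D n|ℱ n]) :=
      condExp_indicator (hDint n) (hEmeasF n)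
    have h3 : P[(E n)ᶜ.indicator (fun _ => ε)|ℱ n] =ᵐ[P] (E n)ᶜ.indicator (fun _ => ε) := by
      refine (condExp_indicator (integrable_const ε) (hEmeasF n).compl).trans ?_
      rw [condExp_const (ℱ.le n)]
    exact h2.add h3
  have hUgeε : ∀ n, ∀ᵐ ω ∂P, ε ≤ (P[U n|ℱ n]) ω := by
    intro n
    filter_upwards [hUce n, hDce n] with ω h1 h2
    rw [h1]
    by_cases hm : ω ∈ E n
    · rw [Pi.add_apply, Set.indicator_of_mem hm, Set.indicator_of_notMem (by simp [hm]),
        add_zero, h2]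
      exact hGge n ω hm
    · rw [Pi.add_apply, Set.indicator_of_notMem hm, Set.indicator_of_mem (by simp [hm]),
        zero_add]
  have hUbd : ∀ n, ∀ᵐ ω ∂P, |U n ω| ≤ C₀ := by
    intro n
    filter_upwards [hDabs n] with ω hω
    by_cases hm : ω ∈ E n
    · rw [hU]
      simp only [Pi.add_apply, Set.indicator_of_mem hm, Set.indicator_of_notMem
        (by simp [hm] : ω ∉ (E n)ᶜ), add_zero]
      exact hω.trans (le_max_left _ _)
    · rw [hU]
      simp only [Pi.add_apply, Set.indicator_of_notMem hm, Set.indicator_of_mem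
        (by simp [hm] : ω ∈ (E n)ᶜ), zero_add]
      rw [abs_of_pos hεpos]
      exact le_max_right _ _
  have hUcebd : ∀ n, ∀ᵐ ω ∂P, |(P[U n|ℱ n]) ω| ≤ C₀ := by
    intro n
    have hup : P[U n|ℱ n] ≤ᵐ[P] fun _ => C₀ := by
      have h := condExp_mono (m := ℱ n) (hUint n) (integrable_const C₀)
        ((hUbd n).mono fun ω h => (abs_le.1 h).2)
      rw [condExp_const (ℱ.le n)] at h
      exact h
    have hlow : (fun _ => -C₀) ≤ᵐ[P] P[U n|ℱ n] := by
      have h := condExp_mono (m := ℱ n) (integrable_const (-C₀)) (hUint n)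
        ((hUbd n).mono fun ω h => (abs_le.1 h).1)
      rw [condExp_const (ℱ.le n)] at h
      exact h
    filter_upwards [hup, hlow] with ω h1 h2
    rw [abs_le]
    exact ⟨h2, h1⟩
  -- the martingale differences
  set V : ℕ → Ω → ℝ := fun n ω => U n ω - (P[U n|ℱ n]) ω with hV
  have hVsm : ∀ n, StronglyMeasurable[ℱ (n + 1)] (V n) := by
    intro n
    have hEm' : MeasurableSet[ℱ (n + 1)] (E n) := ℱ.mono n.le_succ _ (hEmeasF n)
    have hDm' : Measurable[ℱ (n + 1)] (D n) := by
      refine Measurable.sub ?_ ?_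
      · exact hTmeas (n + 1) (ℱ (n + 1)) (hζ₁meas (n + 1)) (hζ₂meas (n + 1))
      · exact hTmeas n (ℱ (n + 1))
          ((hζ₁meas n).mono (ℱ.mono n.le_succ) le_rfl)
          ((hζ₂meas n).mono (ℱ.mono n.le_succ) le_rfl)
    have hUm' : StronglyMeasurable[ℱ (n + 1)] (U n) := by
      rw [hU]
      exact (hDm'.stronglyMeasurable.indicator hEm').add
        (stronglyMeasurable_const.indicator hEm'.compl)
    exact hUm'.sub (stronglyMeasurable_condExp.mono (ℱ.mono n.le_succ))
  have hVbd : ∀ n, ∀ᵐ ω ∂P, |V n ω| ≤ 2 * C₀ := by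
    intro n
    filter_upwards [hUbd n, hUcebd n] with ω h1 h2
    rw [hV]
    calc |U n ω - (P[U n|ℱ n]) ω| ≤ |U n ω| + |(P[U n|ℱ n]) ω| := abs_sub _ _
      _ ≤ 2 * C₀ := by linarith
  have hVce : ∀ n, P[V n|ℱ n] =ᵐ[P] 0 := by
    intro n
    have heq : V n = U n - P[U n|ℱ n] := rfl
    rw [heq]
    refine (condExp_sub (m := ℱ n) (hUint n) integrable_condExp).trans ?_
    have h2 : P[P[U n|ℱ n]|ℱ n] = P[U n|ℱ n] :=
      condExp_of_stronglyMeasurable (ℱ.le n) stronglyMeasurable_condExp integrable_condExp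
    rw [h2]
    filter_upwards with ω
    simp
  -- strong law for the martingale differences
  have hslln := mds_slln P ℱ V (2 * C₀) hVsm hVbd hVce
  -- conclusion
  filter_upwards [hslln, ae_all_iff.2 hUgeε, ae_all_iff.2 hDabs] with ω hω hgeω habsω hsurv
  have hmem : ∀ n, ω ∈ E n := by
    intro n k _
    exact ⟨Nat.one_le_iff_ne_zero.2 (hsurv k).1, Nat.one_le_iff_ne_zero.2 (hsurv k).2⟩
  have hUD : ∀ k, U k ω = D k ω := by
    intro k
    rw [hU]
    simp only [Pi.add_apply, Set.indicator_of_mem (hmem k),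
      Set.indicator_of_notMem (by simp [hmem k] : ω ∉ (E k)ᶜ), add_zero]
  have hDsplit : ∀ k, D k ω = V k ω + (P[U k|ℱ k]) ω := by
    intro k
    have hVval : V k ω = U k ω - (P[U k|ℱ k]) ω := rfl
    rw [hVval, hUD k]
    ring
  have hTtel : ∀ n, T n ω = T 0 ω + ∑ k ∈ Finset.range n, D k ω := by
    intro n
    have h := Finset.sum_range_sub (f := fun k => T k ω) n
    simp only [hD]
    rw [h]
    ring
  have key : ∀ n : ℕ, 1 ≤ n →
      ε + (T 0 ω / n + (∑ k ∈ Finset.range n, V k ω) / n) ≤ T n ω / n := by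
    intro n hn
    have hnpos : (0 : ℝ) < n := by exact_mod_cast hn
    have hsum : (n : ℝ) * ε ≤ ∑ k ∈ Finset.range n, (P[U k|ℱ k]) ω := by
      calc (n : ℝ) * ε = ∑ _k ∈ Finset.range n, ε := by
            rw [Finset.sum_const, Finset.card_range, nsmul_eq_mul]
        _ ≤ ∑ k ∈ Finset.range n, (P[U k|ℱ k]) ω := Finset.sum_le_sum fun k _ => hgeω k
    have hDsum : ∑ k ∈ Finset.range n, D k ω
        = ∑ k ∈ Finset.range n, V k ω + ∑ k ∈ Finset.range n, (P[U k|ℱ k]) ω := by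
      rw [← Finset.sum_add_distrib]
      exact Finset.sum_congr rfl fun k _ => hDsplit k
    have hTn : T n ω / n = T 0 ω / n + ((∑ k ∈ Finset.range n, V k ω) / n
        + (∑ k ∈ Finset.range n, (P[U k|ℱ k]) ω) / n) := by
      rw [hTtel n, hDsum]
      field_simp
    rw [hTn]
    have hP : ε ≤ (∑ k ∈ Finset.range n, (P[U k|ℱ k]) ω) / n := by
      rw [le_div_iff₀ hnpos, mul_comm]
      exact hsum
    linarith
  have hlim : Tendsto (fun n : ℕ => ε + (T 0 ω / n + (∑ k ∈ Finset.range n, V k ω) / n))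
      atTop (nhds (ε + (0 + 0))) :=
    tendsto_const_nhds.add ((tendsto_const_div_atTop_nhds_zero_nat (T 0 ω)).add hω)
  have hub : ∀ᶠ n : ℕ in atTop, T n ω / n ≤ |T 0 ω| + C := by
    filter_upwards [eventually_ge_atTop 1] with n hn
    have hnpos : (0 : ℝ) < n := by exact_mod_cast hn
    have hn1 : (1 : ℝ) ≤ n := by exact_mod_cast hn
    have hsumD : ∑ k ∈ Finset.range n, D k ω ≤ n * C := by
      calc ∑ k ∈ Finset.range n, D k ω ≤ ∑ _k ∈ Finset.range n, C :=
          Finset.sum_le_sum fun k _ => (abs_le.1 (habsω k)).2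
        _ = n * C := by rw [Finset.sum_const, Finset.card_range, nsmul_eq_mul]
    have hT0 : T 0 ω ≤ |T 0 ω| := le_abs_self _
    rw [hTtel n, div_le_iff₀ hnpos]
    have habsT0 : |T 0 ω| ≤ |T 0 ω| * n := le_mul_of_one_le_right (abs_nonneg _) hn1
    calc T 0 ω + ∑ k ∈ Finset.range n, D k ω ≤ |T 0 ω| * n + n * C := by linarith
      _ = (|T 0 ω| + C) * n := by ring
  have hεle : ε ≤ liminf (fun n : ℕ => T n ω / (n : ℝ)) atTop := by
    have h1 : liminf (fun n : ℕ => ε + (T 0 ω / n + (∑ k ∈ Finset.range n, V k ω) / n))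
        atTop = ε + (0 + 0) := hlim.liminf_eq
    calc ε = ε + (0 + 0) := by ring
      _ ≤ liminf (fun n : ℕ => T n ω / (n : ℝ)) atTop := by
          rw [← h1]
          refine liminf_le_liminf ?_ hlim.isBoundedUnder_ge
            (isCoboundedUnder_ge_of_eventually_le atTop hub)
          filter_upwards [eventually_ge_atTop 1] with n hn
          exact key n hn
  linarith
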